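/- arXiv:2401.01299 — 2 statements merged into one kernel-verified Lean document; each statement's English description precedes it below -/
import Mathlib

section
/- Let h,t≥1 be integers and let G be a (K_{2,2},K_t)-free graph. Let z∈V(G) and let Y⊆V(G)∖{z} with |Y|≤h and such that z has no neighbor in Y. Let K be the set of all neighbors of z that have at least one neighbor in Y. Then |K| < 2^h·t. -/
/-- `G` is `H`-free: no induced subgraph of `G` is isomorphic to `H`. -/
def Free {V W : Type} (G : SimpleGraph V) (H : SimpleGraph W) : Prop :=
  IsEmpty (H ↪g G)

/-- A graph is chordal if it has no induced cycle on at least four vertices. -/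
def Chordal {V : Type} (G : SimpleGraph V) : Prop :=
  ∀ n : ℕ, 4 ≤ n → IsEmpty (SimpleGraph.cycleGraph n ↪g G)

/-- A graph is even-hole-free if it has no induced cycle on an even number (at least four)
of vertices. -/
def EvenHoleFree {V : Type} (G : SimpleGraph V) : Prop :=
  ∀ n : ℕ, 4 ≤ n → Even n → IsEmpty (SimpleGraph.cycleGraph n ↪g G)

/-- `cone F` is obtained from `F` by adding a universal vertex (the vertex `none`). -/
def cone {V : Type} (F : SimpleGraph V) : SimpleGraph (Option V) :=
  SimpleGraph.fromRel (fun u v => u = none ∨ ∃ a b, u = some a ∧ v = some b ∧ F.Adj a b)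

/-- From a (non-induced-)C4 configuration in a K_{2,2}-free graph, derive a contradiction. -/
lemma c4_config_false {V : Type} (G : SimpleGraph V)
    (hK22 : Free G (completeBipartiteGraph (Fin 2) (Fin 2)))
    {z y x x' : V} (hzy : ¬ G.Adj z y) (hzyne : z ≠ y)
    (hzx : G.Adj z x) (hzx' : G.Adj z x')
    (hyx : G.Adj y x) (hyx' : G.Adj y x')
    (hxx' : x ≠ x') (hnadj : ¬ G.Adj x x') : False := by
  have f : completeBipartiteGraph (Fin 2) (Fin 2) ↪g G := by
    refine ⟨⟨Sum.elim ![z, y] ![x, x'], ?_⟩, ?_⟩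
    · rintro (a | a) (b | b) hab <;> fin_cases a <;> fin_cases b <;>
        simp_all [G.ne_of_adj hzx, G.ne_of_adj hzx', G.ne_of_adj hyx, G.ne_of_adj hyx',
          (G.ne_of_adj hzx).symm, (G.ne_of_adj hzx').symm, (G.ne_of_adj hyx).symm,
          (G.ne_of_adj hyx').symm]
    · rintro (a | a) (b | b) <;> fin_cases a <;> fin_cases b <;>
        simp [completeBipartiteGraph, G.adj_comm, hzx, hzx', hyx, hyx', hzy, hnadj] <;>
        first
          | exact hzy
          | exact fun h => hzy (G.symm h)
          | exact fun h => hnadj (G.symm h)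
          | tauto
  exact hK22.false f

/-- Claim (4.2) in the paper: in a `(K_{2,2}, K_t)`-free graph, if `z` has no neighbor in a
set `Y` of at most `h` vertices (with `z ∉ Y`), then fewer than `2^h · t` neighbors of `z`
have a neighbor in `Y`. -/
theorem stmt15 (h t : ℕ) (hh : 1 ≤ h) (ht : 1 ≤ t)
    {V : Type} [Fintype V] (G : SimpleGraph V)
    (hK22 : Free G (completeBipartiteGraph (Fin 2) (Fin 2)))
    (hKt : Free G (⊤ : SimpleGraph (Fin t)))
    (z : V) (Y : Finset V) (hzY : z ∉ Y) (hYcard : Y.card ≤ h)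
    (hnonadj : ∀ y ∈ Y, ¬ G.Adj z y) :
    ({x : V | G.Adj z x ∧ ∃ y ∈ Y, G.Adj x y}).ncard < 2 ^ h * t := by
  classical
  have hcf : G.CliqueFree t := SimpleGraph.cliqueFree_iff.mpr ⟨fun c => hKt.false c.topEmbedding⟩
  set K : Finset V := Finset.univ.filter (fun x => G.Adj z x ∧ ∃ y ∈ Y, G.Adj x y) with hKdef
  have hset : ({x : V | G.Adj z x ∧ ∃ y ∈ Y, G.Adj x y}) = ↑K := by
    ext x; simp [hKdef]
  rw [hset, Set.ncard_coe_finset]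
  -- fibers of x ↦ Y.filter (G.Adj x)
  have hclique : ∀ S ∈ Y.powerset, G.IsClique
      ((K.filter (fun x => Y.filter (G.Adj x) = S)) : Finset V) := by
    intro S _
    intro x hx x' hx' hne
    simp only [Finset.coe_filter, Set.mem_setOf_eq, hKdef, Finset.mem_filter] at hx hx'
    obtain ⟨⟨-, hzx, y, hyY, hxy⟩, hS⟩ := hx
    obtain ⟨⟨-, hzx', -⟩, hS'⟩ := hx'
    by_contra hnadj
    have hyS : y ∈ S := by rw [← hS]; simp [hyY, hxy]
    have hx'y : G.Adj x' y := by
      have := hS' ▸ hyS; simp at this; exact this.2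
    exact c4_config_false G hK22 (hnonadj y hyY) (fun he => hzY (he ▸ hyY)) hzx hzx'
      (G.adj_symm hxy) (G.adj_symm hx'y) hne hnadj
  have hfib : ∀ S ∈ Y.powerset,
      (K.filter (fun x => Y.filter (G.Adj x) = S)).card ≤ t - 1 := by
    intro S hS
    by_contra hcard
    push_neg at hcard
    obtain ⟨s, hsub, hscard⟩ := Finset.exists_subset_card_eq (s := K.filter (fun x => Y.filter (G.Adj x) = S)) (n := t) (by omega)
    exact hcf s ⟨(hclique S hS).subset (by exact_mod_cast hsub), hscard⟩
  have hcover : K ⊆ Y.powerset.biUnion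
      (fun S => K.filter (fun x => Y.filter (G.Adj x) = S)) := by
    intro x hx
    simp only [Finset.mem_biUnion, Finset.mem_powerset]
    exact ⟨Y.filter (G.Adj x), Finset.filter_subset _ _, by simp [hx]⟩
  calc K.card ≤ (Y.powerset.biUnion _).card := Finset.card_le_card hcover
    _ ≤ ∑ S ∈ Y.powerset, (K.filter (fun x => Y.filter (G.Adj x) = S)).card :=
        Finset.card_biUnion_le
    _ ≤ ∑ _S ∈ Y.powerset, (t - 1) := Finset.sum_le_sum hfib
    _ = 2 ^ Y.card * (t - 1) := by simp [Finset.card_powerset, mul_comm]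
    _ ≤ 2 ^ h * (t - 1) := by
        exact Nat.mul_le_mul_right _ (Nat.pow_le_pow_right (by norm_num) hYcard)
    _ < 2 ^ h * t := by
        have : 0 < 2 ^ h := Nat.pow_pos (by norm_num)
        exact (Nat.mul_lt_mul_left this).mpr (by omega)
end

section
/- For every graph F, the graph cone(F) is a 2-forest if and only if F is a forest. -/
/-- A 2-forest: a `K₄`-free chordal graph. -/
def TwoForest {W : Type} (H : SimpleGraph W) : Prop :=
  Chordal H ∧ Free H (⊤ : SimpleGraph (Fin 4))


section Helpers

open SimpleGraph Walk

variable {V : Type} {G : SimpleGraph V}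

lemma range_map_shift {α : Type*} (f : ℕ → α) (m : ℕ) :
    (List.range (m + 1)).map f = f 0 :: (List.range m).map (fun k => f (k + 1)) := by
  rw [List.range_succ_eq_map, List.map_cons, List.map_map]
  rfl

/-- A walk following a sequence of consecutively adjacent vertices. -/
def seqWalk (g : ℕ → V) : ∀ (i m : ℕ), (∀ k < m, G.Adj (g (i + k)) (g (i + k + 1))) →
    G.Walk (g i) (g (i + m))
  | _, 0, _ => Walk.nil
  | i, m + 1, h =>
    (Walk.cons (h 0 (Nat.succ_pos m))
      (seqWalk g (i + 1) m (fun k hk => by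
        have h2 := h (k + 1) (by omega)
        rwa [show i + (k + 1) = i + 1 + k by omega] at h2))).copy rfl (by congr 1; omega)

lemma seqWalk_length (g : ℕ → V) (i m : ℕ) (h : ∀ k < m, G.Adj (g (i + k)) (g (i + k + 1))) :
    (seqWalk g i m h).length = m := by
  induction m generalizing i with
  | zero => rfl
  | succ m ih => simp [seqWalk, ih]

lemma seqWalk_support (g : ℕ → V) (i m : ℕ) (h : ∀ k < m, G.Adj (g (i + k)) (g (i + k + 1))) :
    (seqWalk g i m h).support = (List.range (m + 1)).map (fun k => g (i + k)) := by
  induction m generalizing i with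
  | zero => simp [seqWalk, List.range_succ]
  | succ m ih =>
      rw [range_map_shift]
      simp only [seqWalk, support_copy, support_cons, ih]
      refine congrArg₂ _ (by rw [Nat.add_zero]) (List.map_congr_left fun k hk => ?_)
      rw [show i + (k + 1) = i + 1 + k by omega]

lemma seqWalk_edges (g : ℕ → V) (i m : ℕ) (h : ∀ k < m, G.Adj (g (i + k)) (g (i + k + 1))) :
    (seqWalk g i m h).edges = (List.range m).map (fun k => s(g (i + k), g (i + k + 1))) := by
  induction m generalizing i with
  | zero => simp [seqWalk]
  | succ m ih =>
      rw [range_map_shift]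
      simp only [seqWalk, edges_copy, edges_cons, ih]
      refine congrArg₂ _ (by rw [Nat.add_zero]) (List.map_congr_left fun k hk => ?_)
      rw [show i + (k + 1) = i + 1 + k by omega]

lemma getVert_eq_support_getElem {u v : V} (p : G.Walk u v) {i : ℕ} (h : i ≤ p.length) :
    p.getVert i = p.support[i]'(by rw [length_support]; omega) := by
  induction p generalizing i with
  | nil => simp [Walk.getVert]
  | cons hadj q ih =>
      cases i with
      | zero => simp [Walk.getVert]
      | succ i =>
          simp only [support_cons, List.getElem_cons_succ, getVert_cons_succ]
          exact ih (by simpa using h)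

lemma cycle_getVert_inj {u : V} {c : G.Walk u u} (hc : c.IsCycle) {i j : ℕ}
    (hi : i < c.length) (hj : j < c.length) (h : c.getVert i = c.getVert j) : i = j := by
  have h3 := hc.three_le_length
  have hlen : c.support.tail.length = c.length := by
    rw [List.length_tail, length_support]; omega
  have key : ∀ k : ℕ, k ≤ c.length → k ≠ 0 →
      c.support.tail[k - 1]? = some (c.getVert k) := by
    intro k hk hk0
    obtain ⟨k', rfl⟩ : ∃ k', k = k' + 1 := ⟨k - 1, by omega⟩
    have h1 : c.support[k' + 1]? = some (c.getVert (k' + 1)) := by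
      rw [List.getElem?_eq_getElem (by rw [length_support]; omega),
        _root_.getVert_eq_support_getElem _ hk]
    rw [support_eq_cons c, List.getElem?_cons_succ] at h1
    simpa using h1
  have hnd := hc.support_nodup
  rcases Nat.eq_zero_or_pos i with hi0 | hip <;> rcases Nat.eq_zero_or_pos j with hj0 | hjp
  · omega
  · exfalso
    subst hi0
    rw [getVert_zero] at h
    have h1 := key c.length le_rfl (by omega)
    rw [getVert_length] at h1
    have h2 := key j hj.le (by omega)
    rw [← h] at h2
    have := (List.getElem?_inj (by omega) hnd).mp (h2.trans h1.symm)
    omega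
  · exfalso
    subst hj0
    rw [getVert_zero] at h
    have h1 := key c.length le_rfl (by omega)
    rw [getVert_length] at h1
    have h2 := key i hi.le (by omega)
    rw [h] at h2
    have := (List.getElem?_inj (by omega) hnd).mp (h2.trans h1.symm)
    omega
  · have h1 := key i hi.le (by omega)
    have h2 := key j hj.le (by omega)
    rw [h] at h1
    have := (List.getElem?_inj (by omega) hnd).mp (h1.trans h2.symm)
    omega

open Fin.NatCast Fin.CommRing in
lemma not_isAcyclic_of_cyclicSeq {n : ℕ} [NeZero n] (hn : 3 ≤ n) (g : Fin n → V)
    (hinj : Function.Injective g) (hadj : ∀ i : Fin n, G.Adj (g i) (g (i + 1))) :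
    ¬ G.IsAcyclic := by
  set g' : ℕ → V := fun k => g (k : Fin n) with hg'
  have hcast : ∀ k : ℕ, k < n → ((k : Fin n) : ℕ) = k := fun k hk => Fin.val_cast_of_lt hk
  have hginj : ∀ k l : ℕ, k < n → l < n → g' k = g' l → k = l := by
    intro k l hk hl h
    have := congrArg Fin.val (hinj h)
    rwa [hcast k hk, hcast l hl] at this
  have hadj' : ∀ k < n - 1, G.Adj (g' (0 + k)) (g' (0 + k + 1)) := by
    intro k hk
    simp only [Nat.zero_add, hg']
    have h1 : ((k + 1 : ℕ) : Fin n) = (k : Fin n) + 1 := by push_cast; ring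
    rw [h1]
    exact hadj _
  have hQpath : (seqWalk g' 0 (n - 1) hadj').IsPath := by
    rw [Walk.isPath_def, seqWalk_support]
    refine List.Nodup.map_on ?_ List.nodup_range
    intro k hk l hl h
    simp only [List.mem_range] at hk hl
    have := hginj (0 + k) (0 + l) (by omega) (by omega) h
    omega
  have hadj_last : G.Adj (g' (0 + (n - 1))) (g' 0) := by
    have h1 : ((n - 1 : ℕ) : Fin n) + 1 = ((0 : ℕ) : Fin n) := by
      have h2 : ((n - 1 : ℕ) : Fin n) + 1 = ((n - 1 + 1 : ℕ) : Fin n) := by push_cast; ring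
      rw [h2, show n - 1 + 1 = n by omega]
      simp
    have h3 := hadj ((n - 1 : ℕ) : Fin n)
    rw [h1] at h3
    simpa [hg'] using h3
  have hedge : s(g' (0 + (n - 1)), g' 0) ∉ (seqWalk g' 0 (n - 1) hadj').edges := by
    rw [seqWalk_edges]
    intro hmem
    simp only [List.mem_map, List.mem_range] at hmem
    obtain ⟨k, hk, hkeq⟩ := hmem
    rw [Sym2.eq_iff] at hkeq
    rcases hkeq with ⟨h1, h2⟩ | ⟨h1, h2⟩
    · have := hginj _ _ (by omega) (by omega) h2.symm
      omega
    · have := hginj _ _ (by omega) (by omega) h2.symm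
      have := hginj _ _ (by omega) (by omega) h1
      omega
  intro hac
  exact hac _ ((Walk.cons_isCycle_iff _ hadj_last).mpr ⟨hQpath, hedge⟩)

lemma not_isAcyclic_of_cycleGraph_emb {n : ℕ} (hn : 3 ≤ n)
    (e : SimpleGraph.cycleGraph n ↪g G) : ¬ G.IsAcyclic := by
  haveI : NeZero n := ⟨by omega⟩
  refine not_isAcyclic_of_cyclicSeq hn e e.injective fun i => ?_
  refine e.map_adj_iff.mpr ?_
  rw [SimpleGraph.cycleGraph_adj']
  right
  rw [add_sub_cancel_left]
  obtain ⟨n, rfl⟩ : ∃ m, n = m + 3 := ⟨n - 3, by omega⟩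
  simp [Fin.val_one]

lemma triangle_or_hole : ∀ m : ℕ, ∀ {u : V} (c : G.Walk u u), c.IsCycle → c.length = m →
    (∃ a b d : V, G.Adj a b ∧ G.Adj b d ∧ G.Adj d a) ∨
    ∃ n, 4 ≤ n ∧ Nonempty (SimpleGraph.cycleGraph n ↪g G) := by
  intro m
  induction m using Nat.strong_induction_on with
  | _ m ih =>
    intro u c hc hm
    subst hm
    have h3 := hc.three_le_length
    by_cases h4 : c.length = 3
    · -- triangle
      left
      refine ⟨u, c.getVert 1, c.getVert 2, ?_, ?_, ?_⟩
      · have := c.adj_getVert_succ (i := 0) (by omega)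
        rwa [getVert_zero] at this
      · exact c.adj_getVert_succ (by omega)
      · have := c.adj_getVert_succ (i := 2) (by omega)
        rwa [show (2 : ℕ) + 1 = 3 by rfl, ← h4, getVert_length] at this
    · have h4' : 4 ≤ c.length := by omega
      by_cases hch : ∃ i j, i < j ∧ j < c.length ∧ G.Adj (c.getVert i) (c.getVert j) ∧
          j ≠ i + 1 ∧ ¬(i = 0 ∧ j = c.length - 1)
      · -- chord: build a shorter cycle
        obtain ⟨i, j, hij, hj, hadjc, hne, hne2⟩ := hch
        have hadj' : ∀ k < j - i, G.Adj (c.getVert (i + k)) (c.getVert (i + k + 1)) :=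
          fun k hk => c.adj_getVert_succ (by omega)
        have hcopy : c.getVert (i + (j - i)) = c.getVert j := congrArg c.getVert (by omega)
        set q' := (seqWalk c.getVert i (j - i) hadj').copy rfl hcopy with hq'
        have hpath : q'.IsPath := by
          rw [hq', Walk.isPath_def, Walk.support_copy, seqWalk_support]
          refine List.Nodup.map_on ?_ List.nodup_range
          intro k hk l hl h
          simp only [List.mem_range] at hk hl
          have := cycle_getVert_inj hc (i := i + k) (j := i + l) (by omega) (by omega) h
          omega
        have hedge : s(c.getVert j, c.getVert i) ∉ q'.edges := by
          rw [hq', Walk.edges_copy, seqWalk_edges]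
          intro hmem
          simp only [List.mem_map, List.mem_range] at hmem
          obtain ⟨k, hk, hkeq⟩ := hmem
          rw [Sym2.eq_iff] at hkeq
          rcases hkeq with ⟨h1, h2⟩ | ⟨h1, h2⟩
          · have := cycle_getVert_inj hc (i := i + k + 1) (j := i) (by omega) (by omega) h2
            omega
          · have e1 := cycle_getVert_inj hc (i := i + k) (j := i) (by omega) (by omega) h1
            have e2 := cycle_getVert_inj hc (i := i + k + 1) (j := j) (by omega) (by omega) h2
            omega
        have hcyc' : (Walk.cons hadjc.symm q').IsCycle :=
          (Walk.cons_isCycle_iff q' hadjc.symm).mpr ⟨hpath, hedge⟩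
        have hlen' : (Walk.cons hadjc.symm q').length = (j - i) + 1 := by
          rw [Walk.length_cons, hq', Walk.length_copy, seqWalk_length]
        exact ih ((j - i) + 1) (by omega) _ hcyc' hlen'
      · -- no chord: induced cycle
        right
        push_neg at hch
        refine ⟨c.length, h4', ⟨?_⟩⟩
        haveI : NeZero c.length := ⟨by omega⟩
        set f : Fin c.length → V := fun x => c.getVert x.val with hf
        have finj : Function.Injective f := by
          intro a b h
          exact Fin.ext (cycle_getVert_inj hc a.isLt b.isLt h)
        have hone : ((1 : Fin c.length) : ℕ) = 1 := by
          rw [Fin.val_one', Nat.mod_eq_of_lt (by omega)]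
        have haddval : ∀ x : Fin c.length, ((x + 1 : Fin c.length) : ℕ) = (x.val + 1) % c.length := by
          intro x
          simp [Fin.add_def, hone]
        have fadj : ∀ a b : Fin c.length, ((b - a : Fin c.length) : ℕ) = 1 →
            G.Adj (f a) (f b) := by
          intro a b hab
          have hb : b = a + 1 := by
            have h1 : b - a = 1 := Fin.ext (by rw [hone]; exact hab)
            have h2 : b = 1 + a := sub_eq_iff_eq_add.mp h1
            rw [h2, add_comm]
          have hbval : (b : ℕ) = (a.val + 1) % c.length :=
            (congrArg Fin.val hb).trans (haddval a)
          by_cases hlt : a.val + 1 < c.length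
          · have hbv : (b : ℕ) = a.val + 1 := by rw [hbval, Nat.mod_eq_of_lt hlt]
            show G.Adj (c.getVert a.val) (c.getVert b.val)
            rw [hbv]
            exact c.adj_getVert_succ (by omega)
          · have hav := a.isLt
            have hb0 : (b : ℕ) = 0 := by
              rw [hbval, show a.val + 1 = c.length by omega, Nat.mod_self]
            have hstep := c.adj_getVert_succ (i := a.val) (by omega)
            rw [show a.val + 1 = c.length by omega, getVert_length] at hstep
            show G.Adj (c.getVert a.val) (c.getVert b.val)
            rw [hb0, getVert_zero]
            exact hstep
        have hclaim : ∀ a b : Fin c.length, a.val < b.val → G.Adj (f a) (f b) →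
            (SimpleGraph.cycleGraph c.length).Adj a b := by
          intro a b hab h
          have hbv := b.isLt
          have hch' := hch a.val b.val hab b.isLt h
          rw [SimpleGraph.cycleGraph_adj']
          by_cases hj1 : b.val = a.val + 1
          · have hb : b = a + 1 :=
              Fin.ext (by rw [haddval, Nat.mod_eq_of_lt (by omega), hj1])
            right
            rw [hb, add_sub_cancel_left, hone]
          · obtain ⟨ha0, hbm⟩ := hch' hj1
            have ha : a = b + 1 :=
              Fin.ext (by rw [haddval, hbm, show c.length - 1 + 1 = c.length by omega,
                Nat.mod_self, ha0])
            left
            rw [ha, add_sub_cancel_left, hone]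
        exact ⟨⟨f, finj⟩, by
          intro a b
          constructor
          · intro h
            rcases Nat.lt_trichotomy a.val b.val with hlt | heq | hgt
            · exact hclaim a b hlt h
            · exact absurd (Fin.ext heq) (by rintro rfl; exact h.ne rfl)
            · exact (hclaim b a hgt h.symm).symm
          · intro h
            rw [SimpleGraph.cycleGraph_adj'] at h
            rcases h with h | h
            · exact (fadj b a h).symm
            · exact fadj a b h⟩

end Helpers

section Cone

open SimpleGraph Walk

variable {W : Type} {F : SimpleGraph W}

lemma cone_adj_some_some {a b : W} : (cone F).Adj (some a) (some b) ↔ F.Adj a b := by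
  rw [cone, SimpleGraph.fromRel_adj]
  constructor
  · rintro ⟨hne, h | h⟩
    · rcases h with h | ⟨x, y, hx, hy, hxy⟩
      · exact absurd h (by simp)
      · cases hx; cases hy; exact hxy
    · rcases h with h | ⟨x, y, hx, hy, hxy⟩
      · exact absurd h (by simp)
      · cases hx; cases hy; exact hxy.symm
  · intro h
    exact ⟨by simpa using h.ne, Or.inl (Or.inr ⟨a, b, rfl, rfl, h⟩)⟩

lemma cone_adj_none_some {a : W} : (cone F).Adj none (some a) := by
  rw [cone, SimpleGraph.fromRel_adj]
  exact ⟨by simp, Or.inl (Or.inl rfl)⟩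

lemma cone_adj_some_none {a : W} : (cone F).Adj (some a) none :=
  cone_adj_none_some.symm

/-- The canonical embedding of `F` into `cone F`. -/
def someEmb (F : SimpleGraph W) : F ↪g cone F :=
  ⟨⟨some, Option.some_injective W⟩, cone_adj_some_some⟩

end Cone

open Fin.NatCast Fin.CommRing in
/-- For every graph `F`, `cone F` is a 2-forest if and only if `F` is a forest. -/
theorem stmt16 {W : Type} (F : SimpleGraph W) :
    TwoForest (cone F) ↔ F.IsAcyclic := by
  constructor
  · rintro ⟨hch, hfree⟩
    intro v c hcyc
    rcases triangle_or_hole c.length c hcyc rfl with ⟨a, b, d, hab, hbd, hda⟩ | ⟨n, hn4, ⟨e⟩⟩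
    · -- triangle in F gives a K₄ in cone F
      refine hfree.false (⟨⟨![none, some a, some b, some d], ?_⟩, ?_⟩ :
        (⊤ : SimpleGraph (Fin 4)) ↪g cone F)
      · intro i j h
        fin_cases i <;> fin_cases j <;>
          simp_all [hab.ne, hbd.ne, hda.ne, hab.ne', hbd.ne', hda.ne']
      · intro i j
        simp only [SimpleGraph.top_adj]
        show (cone F).Adj (![none, some a, some b, some d] i) (![none, some a, some b, some d] j) ↔ i ≠ j
        fin_cases i <;> fin_cases j <;>
          simp [cone_adj_some_some, cone_adj_none_some, cone_adj_some_none,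
            hab, hbd, hda, hab.symm, hbd.symm, hda.symm, hab.ne, hbd.ne, hda.ne,
            hab.ne', hbd.ne', hda.ne']
    · exact (hch n hn4).false ((someEmb F).comp e)
  · intro hac
    constructor
    · -- Chordal
      intro n hn
      constructor
      intro e
      haveI : NeZero n := ⟨by omega⟩
      obtain ⟨m, rfl⟩ : ∃ m, n = m + 2 := ⟨n - 2, by omega⟩
      have hval : ∀ k : ℕ, k < m + 2 → (((k : ℕ) : Fin (m + 2)) : ℕ) = k :=
        fun k hk => Fin.val_cast_of_lt hk
      have h2v : ((2 : Fin (m + 2)) : ℕ) = 2 := by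
        rw [show (2 : Fin (m + 2)) = ((2 : ℕ) : Fin (m + 2)) by norm_cast, hval 2 (by omega)]
      have h3v : ((3 : Fin (m + 2)) : ℕ) = 3 := by
        rw [show (3 : Fin (m + 2)) = ((3 : ℕ) : Fin (m + 2)) by norm_cast, hval 3 (by omega)]
      have hsome : ∀ i : Fin (m + 2), e i ≠ none := by
        intro i hnone
        have hji : i + 2 ≠ i := by
          intro h
          have h0 : (2 : Fin (m + 2)) = 0 := by
            have := left_eq_add.mp h.symm
            exact this
          rw [Fin.ext_iff, h2v] at h0
          simp at h0
        have hnadj : ¬ (SimpleGraph.cycleGraph (m + 2)).Adj i (i + 2) := by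
          rw [SimpleGraph.cycleGraph_adj]
          rintro (h | h)
          · have h0 : (3 : Fin (m + 2)) = 0 := by
              have h1 : i = 1 + (i + 2) := sub_eq_iff_eq_add.mp h
              have h2 : i = i + 3 := h1.trans (by ring)
              exact (left_eq_add.mp h2).symm ▸ rfl
            rw [Fin.ext_iff, h3v] at h0
            simp at h0
          · rw [add_sub_cancel_left] at h
            have h0 := congrArg Fin.val h
            rw [h2v, Fin.val_one', Nat.mod_eq_of_lt (by omega)] at h0
            omega
        have hejs : ∃ w, e (i + 2) = some w := by
          cases hej : e (i + 2) with
          | none => exact absurd (e.injective (hej.trans hnone.symm)) hji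
          | some w => exact ⟨w, rfl⟩
        obtain ⟨w, hw⟩ := hejs
        have : (cone F).Adj (e i) (e (i + 2)) := by
          rw [hnone, hw]
          exact cone_adj_none_some
        exact hnadj (e.map_adj_iff.mp this)
      have hfs : ∀ i : Fin (m + 2), (e i).isSome :=
        fun i => Option.isSome_iff_ne_none.mpr (hsome i)
      set f : Fin (m + 2) → W := fun i => (e i).get (hfs i) with hf
      have hfe : ∀ i, e i = some (f i) := fun i => (Option.some_get (hfs i)).symm
      have emb : SimpleGraph.cycleGraph (m + 2) ↪g F := by
        refine ⟨⟨f, ?_⟩, ?_⟩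
        · intro i j h
          apply e.injective
          rw [hfe i, hfe j, h]
        · intro i j
          have key : F.Adj (f i) (f j) ↔ (SimpleGraph.cycleGraph (m + 2)).Adj i j := by
            rw [← cone_adj_some_some (F := F), ← hfe, ← hfe]
            exact e.map_adj_iff
          exact key
      exact not_isAcyclic_of_cycleGraph_emb (by omega) emb hac
    · -- K₄-free
      constructor
      intro e
      obtain ⟨x, y, z, hxy, hyz, hxz, hx, hy, hz⟩ :
          ∃ x y z : Fin 4, x ≠ y ∧ y ≠ z ∧ x ≠ z ∧ e x ≠ none ∧ e y ≠ none ∧ e z ≠ none := by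
        by_cases h0 : e 0 = none
        · refine ⟨1, 2, 3, by decide, by decide, by decide, ?_, ?_, ?_⟩ <;>
            · intro h
              have := e.injective (h.trans h0.symm)
              simp at this
        · by_cases h1 : e 1 = none
          · refine ⟨0, 2, 3, by decide, by decide, by decide, h0, ?_, ?_⟩ <;>
              · intro h
                have := e.injective (h.trans h1.symm)
                simp at this
          · by_cases h2 : e 2 = none
            · refine ⟨0, 1, 3, by decide, by decide, by decide, h0, h1, ?_⟩
              intro h
              have := e.injective (h.trans h2.symm)
              simp at this
            · exact ⟨0, 1, 2, by decide, by decide, by decide, h0, h1, h2⟩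
      obtain ⟨a, ha⟩ := Option.isSome_iff_exists.mp (Option.isSome_iff_ne_none.mpr hx)
      obtain ⟨b, hb⟩ := Option.isSome_iff_exists.mp (Option.isSome_iff_ne_none.mpr hy)
      obtain ⟨d, hd⟩ := Option.isSome_iff_exists.mp (Option.isSome_iff_ne_none.mpr hz)
      have hadj : ∀ {p q : Fin 4} {s t : W}, p ≠ q → e p = some s → e q = some t →
          F.Adj s t := by
        intro p q s t hpq hp hq
        have : (cone F).Adj (e p) (e q) := e.map_adj_iff.mpr (by simpa using hpq)
        rw [hp, hq, cone_adj_some_some] at this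
        exact this
      have hab : F.Adj a b := hadj hxy ha hb
      have hbd : F.Adj b d := hadj hyz hb hd
      have hda : F.Adj d a := hadj (Ne.symm hxz) hd ha
      -- triangle gives a cycle
      refine not_isAcyclic_of_cyclicSeq (n := 3) (by omega) ![a, b, d] ?_ ?_ hac
      · intro i j h
        fin_cases i <;> fin_cases j <;>
          simp_all [hab.ne, hbd.ne, hda.ne, hab.ne', hbd.ne', hda.ne']
      · intro i
        fin_cases i <;> simp [hab, hbd, hda]
end
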